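/- Let ω be a permutation and k a positive integer. Suppose (a₁,b₁),…,(a_m,b_m) is a saturated k-Bruhat chain from ω such that b₁,…,b_m are pairwise distinct (a Sottile r-sequence). Then the sequence can be reordered to a saturated k-Bruhat chain (a₁',b₁'),…,(a_m',b_m') from ω to the same endpoint with a₁' ≥ a₂' ≥ ⋯ ≥ a_m'. -/

import Mathlib

def len {n : ℕ} (ω : Equiv.Perm (Fin n)) : ℕ :=
  (Finset.univ.filter (fun p : Fin n × Fin n => p.1 < p.2 ∧ ω p.2 < ω p.1)).card

section Aux
variable {n : ℕ}

open Finset Equiv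

private lemma len_mul_swap_card (u : Equiv.Perm (Fin n)) (x y : Fin n) :
    len (u * Equiv.swap x y) =
      (Finset.univ.filter (fun p : Fin n × Fin n =>
        Equiv.swap x y p.1 < Equiv.swap x y p.2 ∧ u p.2 < u p.1)).card := by
  unfold len
  refine Finset.card_nbij' (fun p => (Equiv.swap x y p.1, Equiv.swap x y p.2))
    (fun p => (Equiv.swap x y p.1, Equiv.swap x y p.2)) ?_ ?_ ?_ ?_
  · intro p hp
    rw [Finset.mem_coe, Finset.mem_filter] at hp ⊢
    simp only [Finset.mem_filter, Finset.mem_univ, true_and, Equiv.Perm.mul_apply] at hp ⊢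
    simpa [Equiv.swap_apply_self] using hp
  · intro p hp
    rw [Finset.mem_coe, Finset.mem_filter] at hp ⊢
    simp only [Finset.mem_filter, Finset.mem_univ, true_and, Equiv.Perm.mul_apply] at hp ⊢
    simpa [Equiv.swap_apply_self] using hp
  · intro p _; simp [Equiv.swap_apply_self]
  · intro p _; simp [Equiv.swap_apply_self]

private lemma swap_cases {x y p q : Fin n} (hxy : x < y) (hpq : p < q)
    (h : Equiv.swap x y q < Equiv.swap x y p) :
    (p = x ∧ q = y) ∨ (p = x ∧ x < q ∧ q < y) ∨ (q = y ∧ x < p ∧ p < y) := by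
  by_cases hpx : p = x
  · subst hpx
    by_cases hqy : q = y
    · exact Or.inl ⟨rfl, hqy⟩
    · have hqx : q ≠ p := hpq.ne'
      rw [Equiv.swap_apply_left, Equiv.swap_apply_of_ne_of_ne hqx hqy] at h
      exact Or.inr (Or.inl ⟨rfl, hpq, h⟩)
  · by_cases hpy : p = y
    · subst hpy
      have hqx : q ≠ x := (hxy.trans hpq).ne'
      have hqy : q ≠ p := hpq.ne'
      rw [Equiv.swap_apply_right, Equiv.swap_apply_of_ne_of_ne hqx hqy] at h
      exact absurd (h.trans (hxy.trans hpq)) (lt_irrefl _)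
    · rw [Equiv.swap_apply_of_ne_of_ne hpx hpy] at h
      by_cases hqx : q = x
      · subst hqx
        rw [Equiv.swap_apply_left] at h
        exact absurd ((hpq.trans hxy).trans h) (lt_irrefl _)
      · by_cases hqy : q = y
        · subst hqy
          rw [Equiv.swap_apply_right] at h
          exact Or.inr (Or.inr ⟨rfl, h, hpq⟩)
        · rw [Equiv.swap_apply_of_ne_of_ne hqx hqy] at h
          exact absurd (hpq.trans h) (lt_irrefl _)

private lemma len_formula (u : Equiv.Perm (Fin n)) {x y : Fin n} (hxy : x < y) (hu : u x < u y) :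
    len (u * Equiv.swap x y) = len u + 1 +
      2 * (Finset.univ.filter (fun c => x < c ∧ c < y ∧ u x < u c ∧ u c < u y)).card := by
  classical
  set σ := Equiv.swap x y with hσdef
  set S : Finset (Fin n × Fin n) :=
    Finset.univ.filter (fun p => p.1 < p.2 ∧ u p.2 < u p.1) with hS
  set T : Finset (Fin n × Fin n) :=
    Finset.univ.filter (fun p => σ p.1 < σ p.2 ∧ u p.2 < u p.1) with hT
  set Mid : Finset (Fin n) :=
    Finset.univ.filter (fun c => x < c ∧ c < y ∧ u x < u c ∧ u c < u y) with hMid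
  set Q1 : Finset (Fin n) := Finset.univ.filter (fun c => x < c ∧ c < y ∧ u x < u c) with hQ1def
  set Q2 : Finset (Fin n) := Finset.univ.filter (fun c => x < c ∧ c < y ∧ u c < u y) with hQ2def
  set Q1' : Finset (Fin n) := Finset.univ.filter (fun c => x < c ∧ c < y ∧ u c < u x) with hQ1'def
  set Q2' : Finset (Fin n) := Finset.univ.filter (fun c => x < c ∧ c < y ∧ u y < u c) with hQ2'def
  set E1 : Finset (Fin n × Fin n) :=
    Finset.univ.filter (fun p => p.1 < p.2 ∧ σ p.2 < σ p.1 ∧ u p.1 < u p.2) with hE1def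
  have hlen : len (u * σ) = T.card := len_mul_swap_card u x y
  have hlenu : len u = S.card := rfl
  -- sdiff descriptions
  have hTS : T \ S = Finset.univ.filter
      (fun p : Fin n × Fin n => p.2 < p.1 ∧ σ p.1 < σ p.2 ∧ u p.2 < u p.1) := by
    ext p
    simp only [Finset.mem_sdiff, hS, hT, Finset.mem_filter, Finset.mem_univ, true_and]
    constructor
    · rintro ⟨⟨h1, h2⟩, h3⟩
      have hn : ¬ p.1 < p.2 := fun hc => h3 ⟨hc, h2⟩
      have hne : p.2 ≠ p.1 := fun hc => absurd h2 (by rw [hc]; exact lt_irrefl _)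
      exact ⟨lt_of_le_of_ne (not_lt.mp hn) hne, h1, h2⟩
    · rintro ⟨h1, h2, h3⟩
      exact ⟨⟨h2, h3⟩, fun hc => absurd (hc.1.trans h1) (lt_irrefl _)⟩
  have hST : S \ T = Finset.univ.filter
      (fun p : Fin n × Fin n => p.1 < p.2 ∧ σ p.2 < σ p.1 ∧ u p.2 < u p.1) := by
    ext p
    simp only [Finset.mem_sdiff, hS, hT, Finset.mem_filter, Finset.mem_univ, true_and]
    constructor
    · rintro ⟨⟨h1, h2⟩, h3⟩
      have hn : ¬ σ p.1 < σ p.2 := fun hc => h3 ⟨hc, h2⟩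
      have hne : σ p.2 ≠ σ p.1 := fun hc => absurd h1 (by
        have := σ.injective hc; rw [this]; exact lt_irrefl _)
      exact ⟨h1, lt_of_le_of_ne (not_lt.mp hn) hne, h2⟩
    · rintro ⟨h1, h2, h3⟩
      exact ⟨⟨h1, h3⟩, fun hc => absurd (hc.1.trans h2) (lt_irrefl _)⟩
  -- (T \ S).card = E1.card via Prod.swap
  have hTScard : (T \ S).card = E1.card := by
    rw [hTS, hE1def]
    refine Finset.card_nbij' Prod.swap Prod.swap ?_ ?_ ?_ ?_
    · intro p hp
      simp only [Finset.mem_coe, Finset.mem_filter, Finset.mem_univ, true_and] at hp ⊢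
      exact hp
    · intro p hp
      simp only [Finset.mem_coe, Finset.mem_filter, Finset.mem_univ, true_and] at hp ⊢
      exact hp
    · intro p _; simp
    · intro p _; simp
  -- decomposition of E1
  have hE1 : E1 = insert ((x, y) : Fin n × Fin n)
      ((Q1.image fun c => (x, c)) ∪ (Q2.image fun c => (c, y))) := by
    ext ⟨p, q⟩
    simp only [hE1def, hQ1def, hQ2def, Finset.mem_insert, Finset.mem_union, Finset.mem_image,
      Finset.mem_filter, Finset.mem_univ, true_and, Prod.mk.injEq]
    constructor
    · rintro ⟨h1, h2, h3⟩
      rcases swap_cases hxy h1 h2 with ⟨hp, hq⟩ | ⟨hp, hq1, hq2⟩ | ⟨hq, hp1, hp2⟩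
      · exact Or.inl ⟨hp, hq⟩
      · subst hp; exact Or.inr (Or.inl ⟨q, ⟨hq1, hq2, h3⟩, rfl, rfl⟩)
      · subst hq; exact Or.inr (Or.inr ⟨p, ⟨hp1, hp2, h3⟩, rfl, rfl⟩)
    · rintro (⟨rfl, rfl⟩ | ⟨c, ⟨hc1, hc2, hc3⟩, rfl, rfl⟩ | ⟨c, ⟨hc1, hc2, hc3⟩, rfl, rfl⟩)
      · exact ⟨hxy, by rw [hσdef, Equiv.swap_apply_left, Equiv.swap_apply_right]; exact hxy, hu⟩
      · exact ⟨hc1, by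
          rw [hσdef, Equiv.swap_apply_left, Equiv.swap_apply_of_ne_of_ne hc1.ne' hc2.ne]
          exact hc2, hc3⟩
      · exact ⟨hc2, by
          rw [hσdef, Equiv.swap_apply_right, Equiv.swap_apply_of_ne_of_ne hc1.ne' hc2.ne]
          exact hc1, hc3⟩
  have hinj1 : Function.Injective (fun c : Fin n => ((x, c) : Fin n × Fin n)) :=
    fun a b h => congrArg Prod.snd h
  have hinj2 : Function.Injective (fun c : Fin n => ((c, y) : Fin n × Fin n)) :=
    fun a b h => congrArg Prod.fst h
  have hdisj12 : Disjoint (Q1.image fun c => ((x, c) : Fin n × Fin n))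
      (Q2.image fun c => (c, y)) := by
    rw [Finset.disjoint_left]
    rintro p hp1 hp2
    simp only [hQ1def, hQ2def, Finset.mem_image, Finset.mem_filter, Finset.mem_univ,
      true_and] at hp1 hp2
    obtain ⟨c, ⟨hc1, -, -⟩, rfl⟩ := hp1
    obtain ⟨d, ⟨hd1, -, -⟩, hd⟩ := hp2
    have : d = x := congrArg Prod.fst hd
    exact absurd (this ▸ hd1) (lt_irrefl _)
  have hnotmem : ((x, y) : Fin n × Fin n) ∉
      (Q1.image fun c => ((x, c) : Fin n × Fin n)) ∪ (Q2.image fun c => (c, y)) := by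
    simp only [Finset.mem_union, Finset.mem_image, hQ1def, hQ2def, Finset.mem_filter,
      Finset.mem_univ, true_and, Prod.mk.injEq]
    rintro (⟨c, ⟨-, hc2, -⟩, -, rfl⟩ | ⟨c, ⟨hc1, -, -⟩, rfl, -⟩)
    · exact absurd hc2 (lt_irrefl _)
    · exact absurd hc1 (lt_irrefl _)
  have hE1card : E1.card = 1 + (Q1.card + Q2.card) := by
    rw [hE1, Finset.card_insert_of_notMem hnotmem, Finset.card_union_of_disjoint hdisj12,
      Finset.card_image_of_injective _ hinj1, Finset.card_image_of_injective _ hinj2]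
    omega
  -- decomposition of S \ T
  have hE2 : S \ T = (Q1'.image fun c => ((x, c) : Fin n × Fin n)) ∪
      (Q2'.image fun c => (c, y)) := by
    rw [hST]
    ext ⟨p, q⟩
    simp only [hQ1'def, hQ2'def, Finset.mem_union, Finset.mem_image,
      Finset.mem_filter, Finset.mem_univ, true_and, Prod.mk.injEq]
    constructor
    · rintro ⟨h1, h2, h3⟩
      rcases swap_cases hxy h1 h2 with ⟨hp, hq⟩ | ⟨hp, hq1, hq2⟩ | ⟨hq, hp1, hp2⟩
      · subst hp; subst hq; exact absurd (h3.trans hu) (lt_irrefl _)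
      · subst hp; exact Or.inl ⟨q, ⟨hq1, hq2, h3⟩, rfl, rfl⟩
      · subst hq; exact Or.inr ⟨p, ⟨hp1, hp2, h3⟩, rfl, rfl⟩
    · rintro (⟨c, ⟨hc1, hc2, hc3⟩, rfl, rfl⟩ | ⟨c, ⟨hc1, hc2, hc3⟩, rfl, rfl⟩)
      · exact ⟨hc1, by
          rw [hσdef, Equiv.swap_apply_left, Equiv.swap_apply_of_ne_of_ne hc1.ne' hc2.ne]
          exact hc2, hc3⟩
      · exact ⟨hc2, by
          rw [hσdef, Equiv.swap_apply_right, Equiv.swap_apply_of_ne_of_ne hc1.ne' hc2.ne]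
          exact hc1, hc3⟩
  have hdisj12' : Disjoint (Q1'.image fun c => ((x, c) : Fin n × Fin n))
      (Q2'.image fun c => (c, y)) := by
    rw [Finset.disjoint_left]
    rintro p hp1 hp2
    simp only [hQ1'def, hQ2'def, Finset.mem_image, Finset.mem_filter, Finset.mem_univ,
      true_and] at hp1 hp2
    obtain ⟨c, ⟨hc1, -, -⟩, rfl⟩ := hp1
    obtain ⟨d, ⟨hd1, -, -⟩, hd⟩ := hp2
    have : d = x := congrArg Prod.fst hd
    exact absurd (this ▸ hd1) (lt_irrefl _)
  have hSTcard : (S \ T).card = Q1'.card + Q2'.card := by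
    rw [hE2, Finset.card_union_of_disjoint hdisj12',
      Finset.card_image_of_injective _ hinj1, Finset.card_image_of_injective _ hinj2]
  -- Q1 = Mid ∪ Q2', Q2 = Mid ∪ Q1'
  have hQ1split : Q1.card = Mid.card + Q2'.card := by
    have he : Q1 = Mid ∪ Q2' := by
      ext c
      simp only [hQ1def, hMid, hQ2'def, Finset.mem_union, Finset.mem_filter, Finset.mem_univ,
        true_and]
      constructor
      · rintro ⟨h1, h2, h3⟩
        rcases lt_trichotomy (u c) (u y) with hlt | heq | hgt
        · exact Or.inl ⟨h1, h2, h3, hlt⟩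
        · exact absurd (u.injective heq) h2.ne
        · exact Or.inr ⟨h1, h2, hgt⟩
      · rintro (⟨h1, h2, h3, -⟩ | ⟨h1, h2, h3⟩)
        · exact ⟨h1, h2, h3⟩
        · exact ⟨h1, h2, hu.trans h3⟩
    have hd : Disjoint Mid Q2' := by
      rw [Finset.disjoint_left]
      intro c hc1 hc2
      simp only [hMid, hQ2'def, Finset.mem_filter, Finset.mem_univ, true_and] at hc1 hc2
      exact absurd (hc1.2.2.2.trans hc2.2.2) (lt_irrefl _)
    rw [he, Finset.card_union_of_disjoint hd]
  have hQ2split : Q2.card = Mid.card + Q1'.card := by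
    have he : Q2 = Mid ∪ Q1' := by
      ext c
      simp only [hQ2def, hMid, hQ1'def, Finset.mem_union, Finset.mem_filter, Finset.mem_univ,
        true_and]
      constructor
      · rintro ⟨h1, h2, h3⟩
        rcases lt_trichotomy (u x) (u c) with hlt | heq | hgt
        · exact Or.inl ⟨h1, h2, hlt, h3⟩
        · exact absurd (u.injective heq) h1.ne
        · exact Or.inr ⟨h1, h2, hgt⟩
      · rintro (⟨h1, h2, -, h4⟩ | ⟨h1, h2, h3⟩)
        · exact ⟨h1, h2, h4⟩
        · exact ⟨h1, h2, h3.trans hu⟩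
    have hd : Disjoint Mid Q1' := by
      rw [Finset.disjoint_left]
      intro c hc1 hc2
      simp only [hMid, hQ1'def, Finset.mem_filter, Finset.mem_univ, true_and] at hc1 hc2
      exact absurd (hc1.2.2.1.trans hc2.2.2) (lt_irrefl _)
    rw [he, Finset.card_union_of_disjoint hd]
  have hc1 : (T ∩ S).card + (T \ S).card = T.card := Finset.card_inter_add_card_sdiff T S
  have hc2 : (S ∩ T).card + (S \ T).card = S.card := Finset.card_inter_add_card_sdiff S T
  have hc3 : (S ∩ T).card = (T ∩ S).card := by rw [Finset.inter_comm]
  rw [hlen, hlenu]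
  omega
end Aux

section Aux2
variable {n : ℕ}

private lemma len_swap_lt (u : Equiv.Perm (Fin n)) {x y : Fin n} (hxy : x < y) (hu : u y < u x) :
    len (u * Equiv.swap x y) < len u := by
  have h1 : (u * Equiv.swap x y) x < (u * Equiv.swap x y) y := by
    simp only [Equiv.Perm.mul_apply, Equiv.swap_apply_left, Equiv.swap_apply_right]
    exact hu
  have h2 := len_formula (u * Equiv.swap x y) hxy h1
  rw [mul_assoc, Equiv.swap_mul_self, mul_one] at h2
  omega

private lemma len_char (u : Equiv.Perm (Fin n)) {x y : Fin n} (hxy : x < y) :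
    len (u * Equiv.swap x y) = len u + 1 ↔
      u x < u y ∧ ∀ c, x < c → c < y → ¬(u x < u c ∧ u c < u y) := by
  constructor
  · intro h
    have hne : u x ≠ u y := fun hc => hxy.ne (u.injective hc)
    rcases hne.lt_or_gt with hlt | hgt
    · refine ⟨hlt, ?_⟩
      have hf := len_formula u hxy hlt
      have hcard : (Finset.univ.filter
          (fun c => x < c ∧ c < y ∧ u x < u c ∧ u c < u y)).card = 0 := by omega
      intro c hc1 hc2
      rintro ⟨hc3, hc4⟩
      have hmem : c ∈ Finset.univ.filter
          (fun c => x < c ∧ c < y ∧ u x < u c ∧ u c < u y) := by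
        simp [hc1, hc2, hc3, hc4]
      rw [Finset.card_eq_zero] at hcard
      rw [hcard] at hmem
      exact absurd hmem (Finset.notMem_empty _)
    · exact absurd h (by have := len_swap_lt u hxy hgt; omega)
  · rintro ⟨h1, h2⟩
    have hf := len_formula u hxy h1
    have hempty : (Finset.univ.filter
        (fun c => x < c ∧ c < y ∧ u x < u c ∧ u c < u y)) = ∅ := by
      rw [Finset.filter_eq_empty_iff]
      intro c _
      rintro ⟨hc1, hc2, hc3, hc4⟩
      exact h2 c hc1 hc2 ⟨hc3, hc4⟩
    rw [hempty] at hf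
    simpa using hf

private lemma key_exchange {u : Equiv.Perm (Fin n)} {k a1 b1 a2 b2 : Fin n}
    (h12 : a1 < a2) (ha2 : a2 ≤ k) (hb1 : k < b1) (hb2 : k < b2) (hbb : b1 ≠ b2)
    (hL1 : len (u * Equiv.swap a1 b1) = len u + 1)
    (hL2 : len (u * Equiv.swap a1 b1 * Equiv.swap a2 b2) = len u + 2) :
    len (u * Equiv.swap a2 b2) = len u + 1 := by
  have hxy1 : a1 < b1 := lt_of_le_of_lt (h12.le.trans ha2) hb1
  have hxy2 : a2 < b2 := lt_of_le_of_lt ha2 hb2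
  set v := u * Equiv.swap a1 b1 with hv
  have hL1' := hL1
  rw [len_char u hxy1] at hL1'
  obtain ⟨hu1, hm1⟩ := hL1'
  have hL2' : len (v * Equiv.swap a2 b2) = len v + 1 := by
    omega
  rw [len_char v hxy2] at hL2'
  obtain ⟨hv1, hm2⟩ := hL2'
  have ha2a1 : a2 ≠ a1 := h12.ne'
  have ha2b1 : a2 ≠ b1 := (ha2.trans_lt hb1).ne
  have hb2a1 : b2 ≠ a1 := ((h12.trans_le ha2).trans hb2).ne'
  have hva2 : v a2 = u a2 := by
    rw [hv]; simp only [Equiv.Perm.mul_apply]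
    rw [Equiv.swap_apply_of_ne_of_ne ha2a1 ha2b1]
  have hvb2 : v b2 = u b2 := by
    rw [hv]; simp only [Equiv.Perm.mul_apply]
    rw [Equiv.swap_apply_of_ne_of_ne hb2a1 hbb.symm]
  rw [len_char u hxy2]
  refine ⟨by rw [hva2, hvb2] at hv1; exact hv1, ?_⟩
  intro c hc1 hc2
  rintro ⟨hm3, hm4⟩
  by_cases hcb1 : c = b1
  · subst hcb1
    have hua : u a2 < u a1 := by
      rcases (show u a1 ≠ u a2 from fun hc => ha2a1 (u.injective hc).symm).lt_or_gt with h | h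
      · exact absurd ⟨h, hm3⟩ (hm1 a2 h12 (ha2.trans_lt hb1))
      · exact h
    refine hm2 c hc1 hc2 ?_
    have hvb1 : v c = u a1 := by
      rw [hv]; simp only [Equiv.Perm.mul_apply, Equiv.swap_apply_right]
    rw [hva2, hvb2, hvb1]
    exact ⟨hua, hu1.trans hm4⟩
  · have hca1 : c ≠ a1 := (h12.trans hc1).ne'
    refine hm2 c hc1 hc2 ?_
    have hvc : v c = u c := by
      rw [hv]; simp only [Equiv.Perm.mul_apply]
      rw [Equiv.swap_apply_of_ne_of_ne hca1 hcb1]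
    rw [hva2, hvb2, hvc]
    exact ⟨hm3, hm4⟩
end Aux2

/-- `ω · t_{a₀,b₀} ⋯ t_{a_{i-1},b_{i-1}}`, the `i`-th permutation along the chain. -/
def chainProd {n : ℕ} (ω : Equiv.Perm (Fin n)) (a b : ℕ → Fin n) (i : ℕ) :
    Equiv.Perm (Fin n) :=
  ω * ((List.range i).map (fun t => Equiv.swap (a t) (b t))).prod

/-- `(a,b)` (with indices `0,…,m-1`) is a saturated `k`-Bruhat chain from `ω`. -/
def IsSatChain {n : ℕ} (ω : Equiv.Perm (Fin n)) (k : Fin n) (m : ℕ)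
    (a b : ℕ → Fin n) : Prop :=
  (∀ t < m, a t ≤ k ∧ k < b t) ∧
  ∀ i ≤ m, len (chainProd ω a b i) = len ω + i

private def swapIdx (t j : ℕ) : ℕ := if j = t then t + 1 else if j = t + 1 then t else j

section Chain
variable {n : ℕ}

private lemma swapIdx_left (t : ℕ) : swapIdx t t = t + 1 := by simp [swapIdx]

private lemma swapIdx_right (t : ℕ) : swapIdx t (t + 1) = t := by simp [swapIdx]

private lemma swapIdx_other {t j : ℕ} (h1 : j ≠ t) (h2 : j ≠ t + 1) : swapIdx t j = j := by
  unfold swapIdx; split_ifs <;> omega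

private lemma swapIdx_invol (t j : ℕ) : swapIdx t (swapIdx t j) = j := by
  unfold swapIdx; split_ifs <;> omega

private lemma swapIdx_lt {t j m : ℕ} (ht : t + 1 < m) (hj : j < m) : swapIdx t j < m := by
  unfold swapIdx; split_ifs <;> omega

private lemma chainProd_succ (ω : Equiv.Perm (Fin n)) (a b : ℕ → Fin n) (i : ℕ) :
    chainProd ω a b (i + 1) = chainProd ω a b i * Equiv.swap (a i) (b i) := by
  unfold chainProd
  rw [List.range_succ, List.map_append, List.prod_append]
  simp [mul_assoc]

private lemma chainProd_congr (ω : Equiv.Perm (Fin n)) (a b a2 b2 : ℕ → Fin n) (i : ℕ)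
    (h : ∀ j < i, a2 j = a j ∧ b2 j = b j) :
    chainProd ω a2 b2 i = chainProd ω a b i := by
  unfold chainProd
  congr 2
  apply List.map_congr_left
  intro j hj
  rw [List.mem_range] at hj
  rw [(h j hj).1, (h j hj).2]

private lemma swaps_commute {a1 b1 a2 b2 : Fin n} (h1 : a1 ≠ a2) (h2 : a1 ≠ b2) (h3 : b1 ≠ a2)
    (h4 : b1 ≠ b2) : Commute (Equiv.swap a1 b1) (Equiv.swap a2 b2) := by
  refine Equiv.Perm.Disjoint.commute (fun x => ?_)
  by_cases hx1 : x = a1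
  · subst hx1; exact Or.inr (Equiv.swap_apply_of_ne_of_ne h1 h2)
  · by_cases hx2 : x = b1
    · subst hx2; exact Or.inr (Equiv.swap_apply_of_ne_of_ne h3 h4)
    · exact Or.inl (Equiv.swap_apply_of_ne_of_ne hx1 hx2)

private lemma step_lemma (ω : Equiv.Perm (Fin n)) (k : Fin n) (m : ℕ) (a b : ℕ → Fin n)
    (hchain : IsSatChain ω k m a b) (hdist : ∀ s < m, ∀ t' < m, b s = b t' → s = t')
    (t : ℕ) (ht : t + 1 < m) (hasc : a t < a (t + 1)) :
    IsSatChain ω k m (fun j => a (swapIdx t j)) (fun j => b (swapIdx t j)) ∧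
    ∀ i, i ≠ t + 1 → chainProd ω (fun j => a (swapIdx t j)) (fun j => b (swapIdx t j)) i
      = chainProd ω a b i := by
  obtain ⟨hab, hlen⟩ := hchain
  set a2 : ℕ → Fin n := fun j => a (swapIdx t j) with ha2
  set b2 : ℕ → Fin n := fun j => b (swapIdx t j) with hb2
  have habk1 := hab t (by omega)
  have habk2 := hab (t + 1) ht
  have hbne : b t ≠ b (t + 1) := fun hc => by
    have := hdist t (by omega) (t + 1) ht hc; omega
  have hcomm : Commute (Equiv.swap (a t) (b t)) (Equiv.swap (a (t + 1)) (b (t + 1))) :=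
    swaps_commute hasc.ne (lt_of_le_of_lt habk1.1 habk2.2).ne
      (lt_of_le_of_lt habk2.1 habk1.2).ne' hbne
  have heq_low : ∀ i ≤ t, chainProd ω a2 b2 i = chainProd ω a b i := by
    intro i hi
    refine chainProd_congr ω a b a2 b2 i (fun j hj => ?_)
    have he : swapIdx t j = j := swapIdx_other (by omega) (by omega)
    constructor
    · simp only [ha2]; rw [he]
    · simp only [hb2]; rw [he]
  have ea : a2 t = a (t + 1) := by simp only [ha2]; rw [swapIdx_left]
  have eb : b2 t = b (t + 1) := by simp only [hb2]; rw [swapIdx_left]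
  have ea' : a2 (t + 1) = a t := by simp only [ha2]; rw [swapIdx_right]
  have eb' : b2 (t + 1) = b t := by simp only [hb2]; rw [swapIdx_right]
  have hmid : chainProd ω a2 b2 (t + 1)
      = chainProd ω a b t * Equiv.swap (a (t + 1)) (b (t + 1)) := by
    rw [chainProd_succ, heq_low t le_rfl, ea, eb]
  have hhigh : ∀ j, chainProd ω a2 b2 (t + 2 + j) = chainProd ω a b (t + 2 + j) := by
    intro j
    induction j with
    | zero =>
      have e1 : chainProd ω a2 b2 (t + 2)
          = chainProd ω a2 b2 (t + 1) * Equiv.swap (a2 (t + 1)) (b2 (t + 1)) :=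
        chainProd_succ ω a2 b2 (t + 1)
      show chainProd ω a2 b2 (t + 2) = chainProd ω a b (t + 2)
      rw [e1, hmid, ea', eb', mul_assoc, ← hcomm.eq, ← mul_assoc, ← chainProd_succ,
        ← chainProd_succ]
    | succ j ihj =>
      have e0 : t + 2 + (j + 1) = (t + 2 + j) + 1 := rfl
      have e2 : a2 (t + 2 + j) = a (t + 2 + j) := by
        simp only [ha2]; rw [swapIdx_other (by omega) (by omega)]
      have e3 : b2 (t + 2 + j) = b (t + 2 + j) := by
        simp only [hb2]; rw [swapIdx_other (by omega) (by omega)]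
      rw [e0, chainProd_succ, chainProd_succ, ihj, e2, e3]
  have hprod : ∀ i, i ≠ t + 1 → chainProd ω a2 b2 i = chainProd ω a b i := by
    intro i hi
    rcases Nat.lt_or_ge i (t + 1) with h | h
    · exact heq_low i (by omega)
    · obtain ⟨j, rfl⟩ : ∃ j, i = t + 2 + j := ⟨i - (t + 2), by omega⟩
      exact hhigh j
  refine ⟨⟨?_, ?_⟩, hprod⟩
  · intro t' ht'
    exact hab (swapIdx t t') (swapIdx_lt ht ht')
  · intro i hi
    by_cases hieq : i = t + 1
    · subst hieq
      have l0 := hlen t (by omega)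
      have l1 := hlen (t + 1) (by omega)
      have l2 := hlen (t + 2) (by omega)
      rw [chainProd_succ] at l1
      rw [chainProd_succ, chainProd_succ] at l2
      have hkey := key_exchange (u := chainProd ω a b t) (k := k) hasc habk2.1 habk1.2
        habk2.2 hbne (by rw [l1, l0]; omega) (by rw [l2, l0]; omega)
      rw [hmid, hkey, l0]; omega
    · rw [hprod i hieq]
      exact hlen i hi

private def ameasure (m : ℕ) (a : ℕ → Fin n) : ℕ :=
  (((Finset.range m) ×ˢ (Finset.range m)).filter
    (fun p : ℕ × ℕ => p.1 < p.2 ∧ a p.1 < a p.2)).card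

private lemma measure_decrease (m : ℕ) (a : ℕ → Fin n) (t : ℕ) (ht : t + 1 < m)
    (hasc : a t < a (t + 1)) :
    ameasure m (fun j => a (swapIdx t j)) < ameasure m a := by
  unfold ameasure
  have hkey : (((Finset.range m) ×ˢ (Finset.range m)).filter
      (fun p : ℕ × ℕ => p.1 < p.2 ∧ a (swapIdx t p.1) < a (swapIdx t p.2))).card ≤
      ((((Finset.range m) ×ˢ (Finset.range m)).filter
      (fun p : ℕ × ℕ => p.1 < p.2 ∧ a p.1 < a p.2)).erase (t, t + 1)).card := by
    apply Finset.card_le_card_of_injOn (fun p => (swapIdx t p.1, swapIdx t p.2))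
    · intro p hp
      simp only [Finset.mem_coe, Finset.mem_filter, Finset.mem_product, Finset.mem_range] at hp
      obtain ⟨⟨hp1, hp2⟩, hp3, hp4⟩ := hp
      have hpt : ¬(p.1 = t ∧ p.2 = t + 1) := by
        rintro ⟨e1, e2⟩
        rw [e1, e2, swapIdx_left, swapIdx_right] at hp4
        exact absurd (hp4.trans hasc) (lt_irrefl _)
      have horder : swapIdx t p.1 < swapIdx t p.2 := by
        unfold swapIdx; split_ifs <;> omega
      rw [Finset.mem_coe, Finset.mem_erase]
      constructor
      · intro hc
        have e1 : swapIdx t p.1 = t := congrArg Prod.fst hc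
        have e2 : swapIdx t p.2 = t + 1 := congrArg Prod.snd hc
        unfold swapIdx at e1 e2
        split_ifs at e1 e2 <;> omega
      · simp only [Finset.mem_filter, Finset.mem_product, Finset.mem_range]
        exact ⟨⟨swapIdx_lt ht hp1, swapIdx_lt ht hp2⟩, horder, hp4⟩
    · intro p hp q hq hpq
      have h1 : swapIdx t p.1 = swapIdx t q.1 := congrArg Prod.fst hpq
      have h2 : swapIdx t p.2 = swapIdx t q.2 := congrArg Prod.snd hpq
      have i1 : p.1 = q.1 := by
        have := congrArg (swapIdx t) h1; rwa [swapIdx_invol, swapIdx_invol] at this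
      have i2 : p.2 = q.2 := by
        have := congrArg (swapIdx t) h2; rwa [swapIdx_invol, swapIdx_invol] at this
      exact Prod.ext i1 i2
  have hmem : ((t, t + 1) : ℕ × ℕ) ∈ ((Finset.range m) ×ˢ (Finset.range m)).filter
      (fun p : ℕ × ℕ => p.1 < p.2 ∧ a p.1 < a p.2) := by
    simp only [Finset.mem_filter, Finset.mem_product, Finset.mem_range]
    exact ⟨⟨by omega, ht⟩, Nat.lt_succ_self t, hasc⟩
  have he := Finset.card_erase_of_mem hmem
  have hpos := Finset.card_pos.mpr ⟨_, hmem⟩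
  have hbeta : ((Finset.range m) ×ˢ (Finset.range m)).filter
        (fun p : ℕ × ℕ => p.1 < p.2 ∧ (fun j => a (swapIdx t j)) p.1
          < (fun j => a (swapIdx t j)) p.2)
      = ((Finset.range m) ×ˢ (Finset.range m)).filter
        (fun p : ℕ × ℕ => p.1 < p.2 ∧ a (swapIdx t p.1) < a (swapIdx t p.2)) :=
    Finset.filter_congr (fun x _ => Iff.rfl)
  rw [hbeta]
  omega

private lemma perm_swap_adjacent {α : Type*} (f g : ℕ → α) (t m : ℕ) (ht : t + 1 < m)
    (h0 : ∀ j, j ≠ t → j ≠ t + 1 → g j = f j) (h1 : g t = f (t + 1)) (h2 : g (t + 1) = f t) :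
    ((List.range m).map f).Perm ((List.range m).map g) := by
  have hr2 : List.range (t + 2) = List.range t ++ [t, t + 1] := by
    rw [show t + 2 = (t + 1) + 1 from rfl, List.range_succ, List.range_succ]
    simp
  have hr : List.range m
      = List.range t ++ t :: (t + 1) :: ((List.range (m - (t + 2))).map (t + 2 + ·)) := by
    conv_lhs => rw [show m = (t + 2) + (m - (t + 2)) from by omega]
    rw [List.range_add, hr2]
    simp
  rw [hr]
  simp only [List.map_append, List.map_cons, List.map_map]
  have e1 : (List.range t).map g = (List.range t).map f :=
    List.map_congr_left (fun j hj => by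
      rw [List.mem_range] at hj
      exact h0 j (by omega) (by omega))
  have e3 : (List.range (m - (t + 2))).map (g ∘ (t + 2 + ·))
      = (List.range (m - (t + 2))).map (f ∘ (t + 2 + ·)) :=
    List.map_congr_left (fun j hj => by
      simp only [Function.comp_apply]
      exact h0 _ (by omega) (by omega))
  rw [e1, e3, h1, h2]
  exact List.Perm.append_left _ (List.Perm.swap _ _ _)

private lemma sort_lemma (ω : Equiv.Perm (Fin n)) (k : Fin n) (m : ℕ) :
    ∀ N (a b : ℕ → Fin n), ameasure m a ≤ N →
      IsSatChain ω k m a b → (∀ s < m, ∀ t < m, b s = b t → s = t) →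
      ∃ a' b' : ℕ → Fin n,
        IsSatChain ω k m a' b' ∧
        chainProd ω a' b' m = chainProd ω a b m ∧
        (∀ t, t + 1 < m → a' (t + 1) ≤ a' t) ∧
        ((List.range m).map (fun t => (a t, b t))).Perm
          ((List.range m).map (fun t => (a' t, b' t))) := by
  intro N
  induction N with
  | zero =>
    intro a b hN hchain hdist
    refine ⟨a, b, hchain, rfl, ?_, List.Perm.refl _⟩
    intro t ht
    by_contra hc
    push_neg at hc
    have hmem : ((t, t + 1) : ℕ × ℕ) ∈ ((Finset.range m) ×ˢ (Finset.range m)).filter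
        (fun p : ℕ × ℕ => p.1 < p.2 ∧ a p.1 < a p.2) := by
      simp only [Finset.mem_filter, Finset.mem_product, Finset.mem_range]
      exact ⟨⟨by omega, ht⟩, Nat.lt_succ_self t, hc⟩
    have := Finset.card_pos.mpr ⟨_, hmem⟩
    unfold ameasure at hN
    omega
  | succ N ih =>
    intro a b hN hchain hdist
    by_cases hex : ∃ t, t + 1 < m ∧ a t < a (t + 1)
    · obtain ⟨t, ht, hasc⟩ := hex
      obtain ⟨hchain2, hprod2⟩ := step_lemma ω k m a b hchain hdist t ht hasc
      have hdist2 : ∀ s < m, ∀ t' < m, b (swapIdx t s) = b (swapIdx t t') → s = t' := by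
        intro s hs t' ht' he
        have := hdist (swapIdx t s) (swapIdx_lt ht hs) (swapIdx t t') (swapIdx_lt ht ht') he
        have := congrArg (swapIdx t) this
        rwa [swapIdx_invol, swapIdx_invol] at this
      have hmeas : ameasure m (fun j => a (swapIdx t j)) ≤ N := by
        have := measure_decrease m a t ht hasc; omega
      obtain ⟨a', b', hC, hP, hM, hperm⟩ :=
        ih (fun j => a (swapIdx t j)) (fun j => b (swapIdx t j)) hmeas hchain2 hdist2
      refine ⟨a', b', hC, ?_, hM, ?_⟩
      · rw [hP, hprod2 m (by omega)]
      · refine List.Perm.trans ?_ hperm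
        refine perm_swap_adjacent _ _ t m ht ?_ ?_ ?_
        · intro j hj1 hj2
          rw [swapIdx_other hj1 hj2]
        · rw [swapIdx_left]
        · rw [swapIdx_right]
    · push_neg at hex
      exact ⟨a, b, hchain, rfl, fun t ht => hex t ht, List.Perm.refl _⟩

end Chain

theorem stmt6 {n : ℕ} (ω : Equiv.Perm (Fin n)) (k : Fin n) (m : ℕ)
    (a b : ℕ → Fin n) (hchain : IsSatChain ω k m a b)
    (hdist : ∀ s < m, ∀ t < m, b s = b t → s = t) :
    ∃ a' b' : ℕ → Fin n,
      IsSatChain ω k m a' b' ∧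
      chainProd ω a' b' m = chainProd ω a b m ∧
      (∀ t, t + 1 < m → a' (t + 1) ≤ a' t) ∧
      ((List.range m).map (fun t => (a t, b t))).Perm
        ((List.range m).map (fun t => (a' t, b' t))) := by
  exact sort_lemma ω k m (ameasure m a) a b le_rfl hchain hdist
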